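/- Let U, V, W, Z be i.i.d. random variables each uniform on [0.1, 0.9], mutually independent. Define B = |U - V| · |Z - W| / (2(Z + W)) and T = ((Z+W)/2) · ((2 - Z - W)/2). Then Cov(B, T) > 0. -/

import Mathlib

open MeasureTheory ProbabilityTheory

noncomputable def unifIcc : Measure ℝ :=
  (ENNReal.ofReal 0.8)⁻¹ • (volume.restrict (Set.Icc (0.1:ℝ) 0.9))

namespace Stmt8Aux

open Set intervalIntegral

lemma unif_apply_Icc : unifIcc (Set.Icc (0.1:ℝ) 0.9) = 1 := by
  simp only [unifIcc, Measure.smul_apply, Measure.restrict_apply measurableSet_Icc,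
    Set.inter_self, Real.volume_Icc, smul_eq_mul]
  rw [show (0.9:ℝ) - 0.1 = 0.8 by norm_num, ← ENNReal.div_eq_inv_mul,
    ENNReal.div_self (by norm_num) (by norm_num)]

instance : IsProbabilityMeasure unifIcc := by
  constructor
  have h : unifIcc (Set.Icc (0.1:ℝ) 0.9) = 1 := unif_apply_Icc
  have h2 : unifIcc (Set.Icc (0.1:ℝ) 0.9)ᶜ = 0 := by
    simp only [unifIcc, Measure.smul_apply,
      Measure.restrict_apply (measurableSet_Icc.compl), Set.compl_inter_self]
    simp
  have h3 := measure_union (μ := unifIcc) (disjoint_compl_right (a := Set.Icc (0.1:ℝ) 0.9))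
    measurableSet_Icc.compl
  rw [Set.union_compl_self] at h3
  rw [h3, h, h2, add_zero]

lemma unif_integral (g : ℝ → ℝ) :
    ∫ x, g x ∂unifIcc = 1.25 * ∫ x in (0.1:ℝ)..0.9, g x := by
  rw [unifIcc, MeasureTheory.integral_smul_measure, MeasureTheory.integral_Icc_eq_integral_Ioc,
    ← intervalIntegral.integral_of_le (by norm_num : (0.1:ℝ) ≤ 0.9)]
  norm_num [ENNReal.toReal_inv]

lemma unif_ae_mem : ∀ᵐ x ∂unifIcc, x ∈ Set.Icc (0.1:ℝ) 0.9 := by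
  rw [unifIcc]
  exact Measure.ae_smul_measure (ae_restrict_mem measurableSet_Icc) _


lemma pi_ae_mem : ∀ᵐ p ∂(unifIcc.prod unifIcc),
    p.1 ∈ Set.Icc (0.1:ℝ) 0.9 ∧ p.2 ∈ Set.Icc (0.1:ℝ) 0.9 := by
  have h : (unifIcc.prod unifIcc) ((Set.Icc (0.1:ℝ) 0.9 ×ˢ Set.Icc (0.1:ℝ) 0.9)ᶜ) = 0 := by
    rw [measure_compl (measurableSet_Icc.prod measurableSet_Icc) (measure_ne_top _ _),
      Measure.prod_prod, unif_apply_Icc]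
    simp
  have h2 : ∀ᵐ p ∂(unifIcc.prod unifIcc), p ∈ (Set.Icc (0.1:ℝ) 0.9 ×ˢ Set.Icc (0.1:ℝ) 0.9) := by
    rw [MeasureTheory.ae_iff]
    convert h using 2
    rfl
  filter_upwards [h2] with p hp
  exact ⟨hp.1, hp.2⟩


noncomputable def qp (s : ℝ) : ℝ := (210/13) + ((-17803)/169) * s ^ 1 + (2393788/6591) * s ^ 2 + ((-1608975)/2197) * s ^ 3 + (1993150/2197) * s ^ 4 + ((-4611875)/6591) * s ^ 5 + (720000/2197) * s ^ 6 + ((-187500)/2197) * s ^ 7 + (62500/6591) * s ^ 8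

lemma qp_cert {s : ℝ} (hs : (1:ℝ)/5 ≤ s) : 1 ≤ s * qp s := by
  simp only [qp]
  nlinarith [sq_nonneg (13 - 63*s + 75*s^2 - 25*s^3), sq_nonneg (s - 7/5),
    mul_nonneg (mul_nonneg (sq_nonneg (13 - 63*s + 75*s^2 - 25*s^3))
      (by linarith : (0:ℝ) ≤ s - 1/5)) (sq_nonneg (s - 7/5))]

set_option maxHeartbeats 1000000 in
lemma int_h_main : ∫ z, (∫ w, |z - w| ∂unifIcc) ∂unifIcc = (4/15) := by
  rw [unif_integral (fun z => ∫ w, |z - w| ∂unifIcc)]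
  have hout : Set.EqOn (fun z => ∫ w, |z - w| ∂unifIcc)
      (fun z => (41/80) + ((-5)/4) * z ^ 1 + (5/4) * z ^ 2) (Set.uIcc (0.1:ℝ) 0.9) := by
    intro z hz
    rw [Set.uIcc_of_le (by norm_num : (0.1:ℝ) ≤ 0.9)] at hz
    obtain ⟨hz1, hz2⟩ := hz
    beta_reduce
    rw [unif_integral (fun w => |z - w|)]
    rw [← intervalIntegral.integral_add_adjacent_intervals (a := (0.1:ℝ)) (b := z) (c := 0.9)
      (f := fun w => |z - w|) (μ := volume)
      ((by fun_prop : Continuous fun w : ℝ => |z - w|).intervalIntegrable _ _)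
      ((by fun_prop : Continuous fun w : ℝ => |z - w|).intervalIntegrable _ _)]
    have hc1 : Set.EqOn (fun w => |z - w|) (fun w => z - w) (Set.uIcc (0.1:ℝ) z) := by
      intro w hw
      rw [Set.uIcc_of_le hz1] at hw
      show |z - w| = z - w
      rw [abs_of_nonneg (by linarith [hw.2] : (0:ℝ) ≤ z - w)]
    have hc2 : Set.EqOn (fun w => |z - w|) (fun w => w - z) (Set.uIcc z (0.9:ℝ)) := by
      intro w hw
      rw [Set.uIcc_of_le hz2] at hw
      show |z - w| = w - z
      rw [abs_sub_comm, abs_of_nonneg (by linarith [hw.1] : (0:ℝ) ≤ w - z)]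
    rw [intervalIntegral.integral_congr hc1, intervalIntegral.integral_congr hc2]
    have hd1 : ∀ w ∈ Set.uIcc (0.1:ℝ) z, HasDerivAt (fun w : ℝ => (1 * z ^ 1) * w ^ 1 + (((-1)/2)) * w ^ 2)
        ((fun w : ℝ => z - w) w) w := by
      intro w _
      have h := (((hasDerivAt_pow 1 w).const_mul ((1 * z ^ 1 : ℝ))).add ((hasDerivAt_pow 2 w).const_mul ((((-1)/2) : ℝ))))
      refine h.congr_deriv ?_
      push_cast
      ring
    have hd2 : ∀ w ∈ Set.uIcc z (0.9:ℝ), HasDerivAt (fun w : ℝ => ((-1) * z ^ 1) * w ^ 1 + ((1/2)) * w ^ 2)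
        ((fun w : ℝ => w - z) w) w := by
      intro w _
      have h := (((hasDerivAt_pow 1 w).const_mul (((-1) * z ^ 1 : ℝ))).add ((hasDerivAt_pow 2 w).const_mul (((1/2) : ℝ))))
      refine h.congr_deriv ?_
      push_cast
      ring
    rw [intervalIntegral.integral_eq_sub_of_hasDerivAt hd1
      ((by fun_prop : Continuous fun w : ℝ => z - w).intervalIntegrable _ _)]
    rw [intervalIntegral.integral_eq_sub_of_hasDerivAt hd2
      ((by fun_prop : Continuous fun w : ℝ => w - z).intervalIntegrable _ _)]
    beta_reduce
    first
    | (norm_num; done)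
    | (norm_num; ring_nf; done)
    | (norm_num; ring_nf; norm_num; done)
    | (ring_nf; norm_num; done)
    | ring
  rw [intervalIntegral.integral_congr hout]
  have hdo : ∀ x ∈ Set.uIcc (0.1:ℝ) 0.9, HasDerivAt (fun x : ℝ => (41/80) * x ^ 1 + ((-5)/8) * x ^ 2 + (5/12) * x ^ 3)
      ((fun z : ℝ => (41/80) + ((-5)/4) * z ^ 1 + (5/4) * z ^ 2) x) x := by
    intro x _
    have h := ((((hasDerivAt_pow 1 x).const_mul (((41/80)) : ℝ)).add ((hasDerivAt_pow 2 x).const_mul ((((-5)/8)) : ℝ))).add ((hasDerivAt_pow 3 x).const_mul (((5/12)) : ℝ)))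
    refine h.congr_deriv ?_
    push_cast
    ring
  rw [intervalIntegral.integral_eq_sub_of_hasDerivAt hdo
    ((by fun_prop : Continuous fun z : ℝ => (41/80) + ((-5)/4) * z ^ 1 + (5/4) * z ^ 2).intervalIntegrable _ _)]
  norm_num

set_option maxHeartbeats 1000000 in
lemma int_fg_main : ∫ z, (∫ w, |z - w| * (2 - z - w) / 8 ∂unifIcc) ∂unifIcc = (1/30) := by
  rw [unif_integral (fun z => ∫ w, |z - w| * (2 - z - w) / 8 ∂unifIcc)]
  have hout : Set.EqOn (fun z => ∫ w, |z - w| * (2 - z - w) / 8 ∂unifIcc)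
      (fun z => (173/1920) + ((-5)/16) * z ^ 1 + (15/32) * z ^ 2 + ((-5)/24) * z ^ 3) (Set.uIcc (0.1:ℝ) 0.9) := by
    intro z hz
    rw [Set.uIcc_of_le (by norm_num : (0.1:ℝ) ≤ 0.9)] at hz
    obtain ⟨hz1, hz2⟩ := hz
    beta_reduce
    rw [unif_integral (fun w => |z - w| * (2 - z - w) / 8)]
    rw [← intervalIntegral.integral_add_adjacent_intervals (a := (0.1:ℝ)) (b := z) (c := 0.9)
      (f := fun w => |z - w| * (2 - z - w) / 8) (μ := volume)
      ((by fun_prop : Continuous fun w : ℝ => |z - w| * (2 - z - w) / 8).intervalIntegrable _ _)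
      ((by fun_prop : Continuous fun w : ℝ => |z - w| * (2 - z - w) / 8).intervalIntegrable _ _)]
    have hc1 : Set.EqOn (fun w => |z - w| * (2 - z - w) / 8) (fun w => (z - w) * (2 - z - w) / 8) (Set.uIcc (0.1:ℝ) z) := by
      intro w hw
      rw [Set.uIcc_of_le hz1] at hw
      show |z - w| * (2 - z - w) / 8 = (z - w) * (2 - z - w) / 8
      rw [abs_of_nonneg (by linarith [hw.2] : (0:ℝ) ≤ z - w)]
    have hc2 : Set.EqOn (fun w => |z - w| * (2 - z - w) / 8) (fun w => (w - z) * (2 - z - w) / 8) (Set.uIcc z (0.9:ℝ)) := by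
      intro w hw
      rw [Set.uIcc_of_le hz2] at hw
      show |z - w| * (2 - z - w) / 8 = (w - z) * (2 - z - w) / 8
      rw [abs_sub_comm, abs_of_nonneg (by linarith [hw.1] : (0:ℝ) ≤ w - z)]
    rw [intervalIntegral.integral_congr hc1, intervalIntegral.integral_congr hc2]
    have hd1 : ∀ w ∈ Set.uIcc (0.1:ℝ) z, HasDerivAt (fun w : ℝ => ((1/4) * z ^ 1 + ((-1)/8) * z ^ 2) * w ^ 1 + (((-1)/8)) * w ^ 2 + ((1/24)) * w ^ 3)
        ((fun w : ℝ => (z - w) * (2 - z - w) / 8) w) w := by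
      intro w _
      have h := ((((hasDerivAt_pow 1 w).const_mul (((1/4) * z ^ 1 + ((-1)/8) * z ^ 2 : ℝ))).add ((hasDerivAt_pow 2 w).const_mul ((((-1)/8) : ℝ)))).add ((hasDerivAt_pow 3 w).const_mul (((1/24) : ℝ))))
      refine h.congr_deriv ?_
      push_cast
      ring
    have hd2 : ∀ w ∈ Set.uIcc z (0.9:ℝ), HasDerivAt (fun w : ℝ => (((-1)/4) * z ^ 1 + (1/8) * z ^ 2) * w ^ 1 + ((1/8)) * w ^ 2 + (((-1)/24)) * w ^ 3)
        ((fun w : ℝ => (w - z) * (2 - z - w) / 8) w) w := by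
      intro w _
      have h := ((((hasDerivAt_pow 1 w).const_mul ((((-1)/4) * z ^ 1 + (1/8) * z ^ 2 : ℝ))).add ((hasDerivAt_pow 2 w).const_mul (((1/8) : ℝ)))).add ((hasDerivAt_pow 3 w).const_mul ((((-1)/24) : ℝ))))
      refine h.congr_deriv ?_
      push_cast
      ring
    rw [intervalIntegral.integral_eq_sub_of_hasDerivAt hd1
      ((by fun_prop : Continuous fun w : ℝ => (z - w) * (2 - z - w) / 8).intervalIntegrable _ _)]
    rw [intervalIntegral.integral_eq_sub_of_hasDerivAt hd2
      ((by fun_prop : Continuous fun w : ℝ => (w - z) * (2 - z - w) / 8).intervalIntegrable _ _)]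
    beta_reduce
    first
    | (norm_num; done)
    | (norm_num; ring_nf; done)
    | (norm_num; ring_nf; norm_num; done)
    | (ring_nf; norm_num; done)
    | ring
  rw [intervalIntegral.integral_congr hout]
  have hdo : ∀ x ∈ Set.uIcc (0.1:ℝ) 0.9, HasDerivAt (fun x : ℝ => (173/1920) * x ^ 1 + ((-5)/32) * x ^ 2 + (5/32) * x ^ 3 + ((-5)/96) * x ^ 4)
      ((fun z : ℝ => (173/1920) + ((-5)/16) * z ^ 1 + (15/32) * z ^ 2 + ((-5)/24) * z ^ 3) x) x := by
    intro x _
    have h := (((((hasDerivAt_pow 1 x).const_mul (((173/1920)) : ℝ)).add ((hasDerivAt_pow 2 x).const_mul ((((-5)/32)) : ℝ))).add ((hasDerivAt_pow 3 x).const_mul (((5/32)) : ℝ))).add ((hasDerivAt_pow 4 x).const_mul ((((-5)/96)) : ℝ)))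
    refine h.congr_deriv ?_
    push_cast
    ring
  rw [intervalIntegral.integral_eq_sub_of_hasDerivAt hdo
    ((by fun_prop : Continuous fun z : ℝ => (173/1920) + ((-5)/16) * z ^ 1 + (15/32) * z ^ 2 + ((-5)/24) * z ^ 3).intervalIntegrable _ _)]
  norm_num

set_option maxHeartbeats 1000000 in
lemma int_q_main : ∫ z, (∫ w, |z - w| * qp (z + w) / 2 ∂unifIcc) ∂unifIcc = (415742842/2854726875) := by
  rw [unif_integral (fun z => ∫ w, |z - w| * qp (z + w) / 2 ∂unifIcc)]
  have hout : Set.EqOn (fun z => ∫ w, |z - w| * qp (z + w) / 2 ∂unifIcc)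
      (fun z => (11266967109/19685120000) + ((-1933978439)/425198592) * z ^ 1 + (164761459/5624320) * z ^ 2 + ((-1614285)/10816) * z ^ 3 + (231107575/421824) * z ^ 4 + ((-96718825)/70304) * z ^ 5 + (245349475/105456) * z ^ 6 + ((-1440284375)/553644) * z ^ 7 + (680309375/369096) * z ^ 8 + ((-19765625)/26364) * z ^ 9 + (15828125/118638) * z ^ 10) (Set.uIcc (0.1:ℝ) 0.9) := by
    intro z hz
    rw [Set.uIcc_of_le (by norm_num : (0.1:ℝ) ≤ 0.9)] at hz
    obtain ⟨hz1, hz2⟩ := hz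
    beta_reduce
    rw [unif_integral (fun w => |z - w| * qp (z + w) / 2)]
    rw [← intervalIntegral.integral_add_adjacent_intervals (a := (0.1:ℝ)) (b := z) (c := 0.9)
      (f := fun w => |z - w| * qp (z + w) / 2) (μ := volume)
      ((by unfold qp; fun_prop : Continuous fun w : ℝ => |z - w| * qp (z + w) / 2).intervalIntegrable _ _)
      ((by unfold qp; fun_prop : Continuous fun w : ℝ => |z - w| * qp (z + w) / 2).intervalIntegrable _ _)]
    have hc1 : Set.EqOn (fun w => |z - w| * qp (z + w) / 2) (fun w => (z - w) * qp (z + w) / 2) (Set.uIcc (0.1:ℝ) z) := by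
      intro w hw
      rw [Set.uIcc_of_le hz1] at hw
      show |z - w| * qp (z + w) / 2 = (z - w) * qp (z + w) / 2
      rw [abs_of_nonneg (by linarith [hw.2] : (0:ℝ) ≤ z - w)]
    have hc2 : Set.EqOn (fun w => |z - w| * qp (z + w) / 2) (fun w => (w - z) * qp (z + w) / 2) (Set.uIcc z (0.9:ℝ)) := by
      intro w hw
      rw [Set.uIcc_of_le hz2] at hw
      show |z - w| * qp (z + w) / 2 = (w - z) * qp (z + w) / 2
      rw [abs_sub_comm, abs_of_nonneg (by linarith [hw.1] : (0:ℝ) ≤ w - z)]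
    rw [intervalIntegral.integral_congr hc1, intervalIntegral.integral_congr hc2]
    have hd1 : ∀ w ∈ Set.uIcc (0.1:ℝ) z, HasDerivAt (fun w : ℝ => ((105/13) * z ^ 1 + ((-17803)/338) * z ^ 2 + (1196894/6591) * z ^ 3 + ((-1608975)/4394) * z ^ 4 + (996575/2197) * z ^ 5 + ((-4611875)/13182) * z ^ 6 + (360000/2197) * z ^ 7 + ((-93750)/2197) * z ^ 8 + (31250/6591) * z ^ 9) * w ^ 1 + (((-105)/26) + (598447/6591) * z ^ 2 + ((-1608975)/4394) * z ^ 3 + (2989725/4394) * z ^ 4 + ((-4611875)/6591) * z ^ 5 + (900000/2197) * z ^ 6 + ((-281250)/2197) * z ^ 7 + (109375/6591) * z ^ 8) * w ^ 2 + ((17803/1014) + ((-1196894)/19773) * z ^ 1 + (1993150/6591) * z ^ 3 + ((-23059375)/39546) * z ^ 4 + (1080000/2197) * z ^ 5 + ((-437500)/2197) * z ^ 6 + (625000/19773) * z ^ 7) * w ^ 3 + (((-598447)/13182) + (1608975/8788) * z ^ 1 + ((-996575)/4394) * z ^ 2 + (450000/2197) * z ^ 4 + ((-328125)/2197) * z ^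 5 + (218750/6591) * z ^ 6) * w ^ 4 + ((321795/4394) + ((-597945)/2197) * z ^ 1 + (4611875/13182) * z ^ 2 + ((-360000)/2197) * z ^ 3 + (87500/6591) * z ^ 5) * w ^ 5 + (((-996575)/13182) + (4611875/19773) * z ^ 1 + ((-540000)/2197) * z ^ 2 + (218750/2197) * z ^ 3 + ((-218750)/19773) * z ^ 4) * w ^ 6 + ((4611875/92274) + ((-1800000)/15379) * z ^ 1 + (187500/2197) * z ^ 2 + ((-125000)/6591) * z ^ 3) * w ^ 7 + (((-45000)/2197) + (140625/4394) * z ^ 1 + ((-78125)/6591) * z ^ 2) * w ^ 8 + ((31250/6591) + ((-218750)/59319) * z ^ 1) * w ^ 9 + (((-3125)/6591)) * w ^ 10)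
        ((fun w : ℝ => (z - w) * qp (z + w) / 2) w) w := by
      intro w _
      have h := (((((((((((hasDerivAt_pow 1 w).const_mul (((105/13) * z ^ 1 + ((-17803)/338) * z ^ 2 + (1196894/6591) * z ^ 3 + ((-1608975)/4394) * z ^ 4 + (996575/2197) * z ^ 5 + ((-4611875)/13182) * z ^ 6 + (360000/2197) * z ^ 7 + ((-93750)/2197) * z ^ 8 + (31250/6591) * z ^ 9 : ℝ))).add ((hasDerivAt_pow 2 w).const_mul ((((-105)/26) + (598447/6591) * z ^ 2 + ((-1608975)/4394) * z ^ 3 + (2989725/4394) * z ^ 4 + ((-4611875)/6591) * z ^ 5 + (900000/2197) * z ^ 6 + ((-281250)/2197) * z ^ 7 + (109375/6591) * z ^ 8 : ℝ)))).add ((hasDerivAt_pow 3 w).const_mul (((17803/1014) + ((-1196894)/19773) * z ^ 1 + (1993150/6591) * z ^ 3 + ((-23059375)/39546) * z ^ 4 + (1080000/2197) * z ^ 5 + ((-437500)/2197) * z ^ 6 + (625000/19773) * z ^ 7 : ℝ)))).add ((hasDerivAt_pow 4 w).const_mul ((((-598447)/13182) + (1608975/8788) * z ^ 1 + ((-996575)/4394)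 * z ^ 2 + (450000/2197) * z ^ 4 + ((-328125)/2197) * z ^ 5 + (218750/6591) * z ^ 6 : ℝ)))).add ((hasDerivAt_pow 5 w).const_mul (((321795/4394) + ((-597945)/2197) * z ^ 1 + (4611875/13182) * z ^ 2 + ((-360000)/2197) * z ^ 3 + (87500/6591) * z ^ 5 : ℝ)))).add ((hasDerivAt_pow 6 w).const_mul ((((-996575)/13182) + (4611875/19773) * z ^ 1 + ((-540000)/2197) * z ^ 2 + (218750/2197) * z ^ 3 + ((-218750)/19773) * z ^ 4 : ℝ)))).add ((hasDerivAt_pow 7 w).const_mul (((4611875/92274) + ((-1800000)/15379) * z ^ 1 + (187500/2197) * z ^ 2 + ((-125000)/6591) * z ^ 3 : ℝ)))).add ((hasDerivAt_pow 8 w).const_mul ((((-45000)/2197) + (140625/4394) * z ^ 1 + ((-78125)/6591) * z ^ 2 : ℝ)))).add ((hasDerivAt_pow 9 w).const_mul (((31250/6591) + ((-218750)/59319) * z ^ 1 : ℝ)))).add ((hasDerivAt_pow 10 w).const_mul ((((-3125)/6591) : ℝ))))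
      refine h.congr_deriv ?_
      simp only [qp]
      push_cast
      ring
    have hd2 : ∀ w ∈ Set.uIcc z (0.9:ℝ), HasDerivAt (fun w : ℝ => (((-105)/13) * z ^ 1 + (17803/338) * z ^ 2 + ((-1196894)/6591) * z ^ 3 + (1608975/4394) * z ^ 4 + ((-996575)/2197) * z ^ 5 + (4611875/13182) * z ^ 6 + ((-360000)/2197) * z ^ 7 + (93750/2197) * z ^ 8 + ((-31250)/6591) * z ^ 9) * w ^ 1 + ((105/26) + ((-598447)/6591) * z ^ 2 + (1608975/4394) * z ^ 3 + ((-2989725)/4394) * z ^ 4 + (4611875/6591) * z ^ 5 + ((-900000)/2197) * z ^ 6 + (281250/2197) * z ^ 7 + ((-109375)/6591) * z ^ 8) * w ^ 2 + (((-17803)/1014) + (1196894/19773) * z ^ 1 + ((-1993150)/6591) * z ^ 3 + (23059375/39546) * z ^ 4 + ((-1080000)/2197) * z ^ 5 + (437500/2197) * z ^ 6 + ((-625000)/19773) * z ^ 7) * w ^ 3 + ((598447/13182) + ((-1608975)/8788) * z ^ 1 + (996575/4394) * z ^ 2 + ((-450000)/2197) * z ^ 4 + (328125/2197) * z ^ 5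 + ((-218750)/6591) * z ^ 6) * w ^ 4 + (((-321795)/4394) + (597945/2197) * z ^ 1 + ((-4611875)/13182) * z ^ 2 + (360000/2197) * z ^ 3 + ((-87500)/6591) * z ^ 5) * w ^ 5 + ((996575/13182) + ((-4611875)/19773) * z ^ 1 + (540000/2197) * z ^ 2 + ((-218750)/2197) * z ^ 3 + (218750/19773) * z ^ 4) * w ^ 6 + (((-4611875)/92274) + (1800000/15379) * z ^ 1 + ((-187500)/2197) * z ^ 2 + (125000/6591) * z ^ 3) * w ^ 7 + ((45000/2197) + ((-140625)/4394) * z ^ 1 + (78125/6591) * z ^ 2) * w ^ 8 + (((-31250)/6591) + (218750/59319) * z ^ 1) * w ^ 9 + ((3125/6591)) * w ^ 10)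
        ((fun w : ℝ => (w - z) * qp (z + w) / 2) w) w := by
      intro w _
      have h := (((((((((((hasDerivAt_pow 1 w).const_mul ((((-105)/13) * z ^ 1 + (17803/338) * z ^ 2 + ((-1196894)/6591) * z ^ 3 + (1608975/4394) * z ^ 4 + ((-996575)/2197) * z ^ 5 + (4611875/13182) * z ^ 6 + ((-360000)/2197) * z ^ 7 + (93750/2197) * z ^ 8 + ((-31250)/6591) * z ^ 9 : ℝ))).add ((hasDerivAt_pow 2 w).const_mul (((105/26) + ((-598447)/6591) * z ^ 2 + (1608975/4394) * z ^ 3 + ((-2989725)/4394) * z ^ 4 + (4611875/6591) * z ^ 5 + ((-900000)/2197) * z ^ 6 + (281250/2197) * z ^ 7 + ((-109375)/6591) * z ^ 8 : ℝ)))).add ((hasDerivAt_pow 3 w).const_mul ((((-17803)/1014) + (1196894/19773) * z ^ 1 + ((-1993150)/6591) * z ^ 3 + (23059375/39546) * z ^ 4 + ((-1080000)/2197) * z ^ 5 + (437500/2197) * z ^ 6 + ((-625000)/19773) * z ^ 7 : ℝ)))).add ((hasDerivAt_pow 4 w).const_mul (((598447/13182) + ((-1608975)/8788) * z ^ 1 +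 (996575/4394) * z ^ 2 + ((-450000)/2197) * z ^ 4 + (328125/2197) * z ^ 5 + ((-218750)/6591) * z ^ 6 : ℝ)))).add ((hasDerivAt_pow 5 w).const_mul ((((-321795)/4394) + (597945/2197) * z ^ 1 + ((-4611875)/13182) * z ^ 2 + (360000/2197) * z ^ 3 + ((-87500)/6591) * z ^ 5 : ℝ)))).add ((hasDerivAt_pow 6 w).const_mul (((996575/13182) + ((-4611875)/19773) * z ^ 1 + (540000/2197) * z ^ 2 + ((-218750)/2197) * z ^ 3 + (218750/19773) * z ^ 4 : ℝ)))).add ((hasDerivAt_pow 7 w).const_mul ((((-4611875)/92274) + (1800000/15379) * z ^ 1 + ((-187500)/2197) * z ^ 2 + (125000/6591) * z ^ 3 : ℝ)))).add ((hasDerivAt_pow 8 w).const_mul (((45000/2197) + ((-140625)/4394) * z ^ 1 + (78125/6591) * z ^ 2 : ℝ)))).add ((hasDerivAt_pow 9 w).const_mul ((((-31250)/6591) + (218750/59319) * z ^ 1 : ℝ)))).add ((hasDerivAt_pow 10 w).const_mul (((3125/6591) : ℝ))))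
      refine h.congr_deriv ?_
      simp only [qp]
      push_cast
      ring
    rw [intervalIntegral.integral_eq_sub_of_hasDerivAt hd1
      ((by unfold qp; fun_prop : Continuous fun w : ℝ => (z - w) * qp (z + w) / 2).intervalIntegrable _ _)]
    rw [intervalIntegral.integral_eq_sub_of_hasDerivAt hd2
      ((by unfold qp; fun_prop : Continuous fun w : ℝ => (w - z) * qp (z + w) / 2).intervalIntegrable _ _)]
    beta_reduce
    first
    | (norm_num; done)
    | (norm_num; ring_nf; done)
    | (norm_num; ring_nf; norm_num; done)
    | (ring_nf; norm_num; done)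
    | ring
  rw [intervalIntegral.integral_congr hout]
  have hdo : ∀ x ∈ Set.uIcc (0.1:ℝ) 0.9, HasDerivAt (fun x : ℝ => (11266967109/19685120000) * x ^ 1 + ((-1933978439)/850397184) * x ^ 2 + (164761459/16872960) * x ^ 3 + ((-1614285)/43264) * x ^ 4 + (46221515/421824) * x ^ 5 + ((-96718825)/421824) * x ^ 6 + (35049925/105456) * x ^ 7 + ((-1440284375)/4429152) * x ^ 8 + (680309375/3321864) * x ^ 9 + ((-3953125)/52728) * x ^ 10 + (15828125/1305018) * x ^ 11)
      ((fun z : ℝ => (11266967109/19685120000) + ((-1933978439)/425198592) * z ^ 1 + (164761459/5624320) * z ^ 2 + ((-1614285)/10816) * z ^ 3 + (231107575/421824) * z ^ 4 + ((-96718825)/70304) * z ^ 5 + (245349475/105456) * z ^ 6 + ((-1440284375)/553644) * z ^ 7 + (680309375/369096) * z ^ 8 + ((-19765625)/26364) * z ^ 9 + (15828125/118638) * z ^ 10) x) x := by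
    intro x _
    have h := ((((((((((((hasDerivAt_pow 1 x).const_mul (((11266967109/19685120000)) : ℝ)).add ((hasDerivAt_pow 2 x).const_mul ((((-1933978439)/850397184)) : ℝ))).add ((hasDerivAt_pow 3 x).const_mul (((164761459/16872960)) : ℝ))).add ((hasDerivAt_pow 4 x).const_mul ((((-1614285)/43264)) : ℝ))).add ((hasDerivAt_pow 5 x).const_mul (((46221515/421824)) : ℝ))).add ((hasDerivAt_pow 6 x).const_mul ((((-96718825)/421824)) : ℝ))).add ((hasDerivAt_pow 7 x).const_mul (((35049925/105456)) : ℝ))).add ((hasDerivAt_pow 8 x).const_mul ((((-1440284375)/4429152)) : ℝ))).add ((hasDerivAt_pow 9 x).const_mul (((680309375/3321864)) : ℝ))).add ((hasDerivAt_pow 10 x).const_mul ((((-3953125)/52728)) : ℝ))).add ((hasDerivAt_pow 11 x).const_mul (((15828125/1305018)) : ℝ)))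
    refine h.congr_deriv ?_
    push_cast
    ring
  rw [intervalIntegral.integral_eq_sub_of_hasDerivAt hdo
    ((by fun_prop : Continuous fun z : ℝ => (11266967109/19685120000) + ((-1933978439)/425198592) * z ^ 1 + (164761459/5624320) * z ^ 2 + ((-1614285)/10816) * z ^ 3 + (231107575/421824) * z ^ 4 + ((-96718825)/70304) * z ^ 5 + (245349475/105456) * z ^ 6 + ((-1440284375)/553644) * z ^ 7 + (680309375/369096) * z ^ 8 + ((-19765625)/26364) * z ^ 9 + (15828125/118638) * z ^ 10).intervalIntegrable _ _)]
  norm_num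

set_option maxHeartbeats 1000000 in
lemma int_g_main : ∫ z, (∫ w, (z + w) / 2 * ((2 - z - w) / 2) ∂unifIcc) ∂unifIcc = (67/300 : ℝ) := by
  rw [unif_integral (fun z => ∫ w, (z + w) / 2 * ((2 - z - w) / 2) ∂unifIcc)]
  have hout : Set.EqOn (fun z => ∫ w, (z + w) / 2 * ((2 - z - w) / 2) ∂unifIcc)
      (fun z => (209/1200) + (1/4) * z ^ 1 + ((-1)/4) * z ^ 2) (Set.uIcc (0.1:ℝ) 0.9) := by
    intro z _
    beta_reduce
    rw [unif_integral (fun w => (z + w) / 2 * ((2 - z - w) / 2))]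
    have hd : ∀ w ∈ Set.uIcc (0.1:ℝ) 0.9, HasDerivAt (fun w : ℝ => ((1/2) * z ^ 1 + ((-1)/4) * z ^ 2) * w ^ 1 + ((1/4) + ((-1)/4) * z ^ 1) * w ^ 2 + (((-1)/12)) * w ^ 3)
        ((fun w : ℝ => (z + w) / 2 * ((2 - z - w) / 2)) w) w := by
      intro w _
      have h := ((((hasDerivAt_pow 1 w).const_mul (((1/2) * z ^ 1 + ((-1)/4) * z ^ 2 : ℝ))).add ((hasDerivAt_pow 2 w).const_mul (((1/4) + ((-1)/4) * z ^ 1 : ℝ)))).add ((hasDerivAt_pow 3 w).const_mul ((((-1)/12) : ℝ))))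
      refine h.congr_deriv ?_
      push_cast
      ring
    rw [intervalIntegral.integral_eq_sub_of_hasDerivAt hd
      ((by fun_prop : Continuous fun w : ℝ => (z + w) / 2 * ((2 - z - w) / 2)).intervalIntegrable _ _)]
    beta_reduce
    first
    | (norm_num; done)
    | (norm_num; ring_nf; done)
    | (norm_num; ring_nf; norm_num; done)
    | (ring_nf; norm_num; done)
    | ring
  rw [intervalIntegral.integral_congr hout]
  have hdo : ∀ x ∈ Set.uIcc (0.1:ℝ) 0.9, HasDerivAt (fun x : ℝ => (209/1200) * x ^ 1 + (1/8) * x ^ 2 + ((-1)/12) * x ^ 3)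
      ((fun z : ℝ => (209/1200) + (1/4) * z ^ 1 + ((-1)/4) * z ^ 2) x) x := by
    intro x _
    have h := ((((hasDerivAt_pow 1 x).const_mul (((209/1200)) : ℝ)).add ((hasDerivAt_pow 2 x).const_mul (((1/8)) : ℝ))).add ((hasDerivAt_pow 3 x).const_mul ((((-1)/12)) : ℝ)))
    refine h.congr_deriv ?_
    push_cast
    ring
  rw [intervalIntegral.integral_eq_sub_of_hasDerivAt hdo
    ((by fun_prop : Continuous fun z : ℝ => (209/1200) + (1/4) * z ^ 1 + ((-1)/4) * z ^ 2).intervalIntegrable _ _)]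
  norm_num

-- QVAL = (415742842/2854726875)

lemma integrable_pi_of_continuous {F : ℝ × ℝ → ℝ} (hF : Continuous F) :
    Integrable F (unifIcc.prod unifIcc) := by
  obtain ⟨C, hC⟩ := (isCompact_Icc.prod isCompact_Icc).exists_bound_of_continuousOn
    (hF.continuousOn (s := Set.Icc (0.1:ℝ) 0.9 ×ˢ Set.Icc (0.1:ℝ) 0.9))
  refine (MeasureTheory.integrable_const C).mono' hF.aestronglyMeasurable ?_
  filter_upwards [pi_ae_mem] with p hp
  exact hC p ⟨hp.1, hp.2⟩

lemma int_h : ∫ p : ℝ × ℝ, |p.1 - p.2| ∂(unifIcc.prod unifIcc) = 4/15 := by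
  rw [MeasureTheory.integral_prod _ (integrable_pi_of_continuous (by fun_prop))]
  exact int_h_main

lemma int_g : ∫ p : ℝ × ℝ, (p.1 + p.2) / 2 * ((2 - p.1 - p.2) / 2)
    ∂(unifIcc.prod unifIcc) = 67/300 := by
  rw [MeasureTheory.integral_prod _ (integrable_pi_of_continuous (by fun_prop))]
  exact int_g_main

lemma int_fg : ∫ p : ℝ × ℝ, (|p.1 - p.2| / (2 * (p.1 + p.2)))
    * ((p.1 + p.2) / 2 * ((2 - p.1 - p.2) / 2)) ∂(unifIcc.prod unifIcc) = 1/30 := by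
  have hae : (fun p : ℝ × ℝ => (|p.1 - p.2| / (2 * (p.1 + p.2)))
      * ((p.1 + p.2) / 2 * ((2 - p.1 - p.2) / 2)))
      =ᵐ[unifIcc.prod unifIcc] (fun p : ℝ × ℝ => |p.1 - p.2| * (2 - p.1 - p.2) / 8) := by
    filter_upwards [pi_ae_mem] with p hp
    have hs : (0:ℝ) < p.1 + p.2 := by
      have := hp.1.1; have := hp.2.1; norm_num at *; linarith
    have hs' : p.1 + p.2 ≠ 0 := ne_of_gt hs
    field_simp
    ring
  rw [MeasureTheory.integral_congr_ae hae,
    MeasureTheory.integral_prod _ (integrable_pi_of_continuous (by fun_prop))]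
  exact int_fg_main

lemma int_f2_integrable : Integrable (fun p : ℝ × ℝ =>
    |p.1 - p.2| / (2 * (p.1 + p.2))) (unifIcc.prod unifIcc) := by
  refine (MeasureTheory.integrable_const (2:ℝ)).mono'
    ((measurable_fst.sub measurable_snd).abs.div
      (measurable_const.mul (measurable_fst.add measurable_snd))).aestronglyMeasurable ?_
  filter_upwards [pi_ae_mem] with p hp
  obtain ⟨⟨h1, h2⟩, ⟨h3, h4⟩⟩ := hp
  norm_num at h1 h2 h3 h4
  have hs : (0:ℝ) < p.1 + p.2 := by linarith
  rw [Real.norm_eq_abs, abs_of_nonneg (div_nonneg (abs_nonneg _) (by linarith))]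
  rw [div_le_iff₀ (by linarith : (0:ℝ) < 2 * (p.1 + p.2))]
  have hd : |p.1 - p.2| ≤ 4/5 := by
    rw [abs_le]; constructor <;> linarith
  nlinarith

lemma int_f_lt : ∫ p : ℝ × ℝ, |p.1 - p.2| / (2 * (p.1 + p.2))
    ∂(unifIcc.prod unifIcc) < 10/67 := by
  have hqcont : Continuous fun p : ℝ × ℝ => |p.1 - p.2| * qp (p.1 + p.2) / 2 := by
    unfold qp; fun_prop
  have hmono : (∫ p : ℝ × ℝ, |p.1 - p.2| / (2 * (p.1 + p.2)) ∂(unifIcc.prod unifIcc))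
      ≤ ∫ p : ℝ × ℝ, |p.1 - p.2| * qp (p.1 + p.2) / 2 ∂(unifIcc.prod unifIcc) := by
    refine MeasureTheory.integral_mono_ae int_f2_integrable
      (integrable_pi_of_continuous hqcont) ?_
    filter_upwards [pi_ae_mem] with p hp
    obtain ⟨⟨h1, h2⟩, ⟨h3, h4⟩⟩ := hp
    norm_num at h1 h2 h3 h4
    have hs : (1:ℝ)/5 ≤ p.1 + p.2 := by linarith
    have h2s : (0:ℝ) < 2 * (p.1 + p.2) := by linarith
    rw [div_le_iff₀ h2s]
    have hm := mul_le_mul_of_nonneg_left (qp_cert hs) (abs_nonneg (p.1 - p.2))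
    nlinarith [hm]
  have heq : ∫ p : ℝ × ℝ, |p.1 - p.2| * qp (p.1 + p.2) / 2 ∂(unifIcc.prod unifIcc)
      = 415742842/2854726875 := by
    rw [MeasureTheory.integral_prod _ (integrable_pi_of_continuous hqcont)]
    exact int_q_main
  rw [heq] at hmono
  calc (∫ p : ℝ × ℝ, |p.1 - p.2| / (2 * (p.1 + p.2)) ∂(unifIcc.prod unifIcc))
      ≤ 415742842/2854726875 := hmono
    _ < 10/67 := by norm_num

end Stmt8Aux

/-- Confounding-bias covariance signal ρ̄(b₁, A) > 0: for U, V, Z, W i.i.d.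
uniform on [0.1, 0.9], the covariance between the bias magnitude
B = |U-V|·|Z-W|/(2(Z+W)) and the treatment variance T = ((Z+W)/2)((2-Z-W)/2)
is strictly positive. -/
theorem stmt_8 {Ω : Type*} [MeasurableSpace Ω] (μ : Measure Ω)
    [IsProbabilityMeasure μ] (U V Z W : Ω → ℝ)
    (hU : Measurable U) (hV : Measurable V) (hZ : Measurable Z)
    (hW : Measurable W)
    (hindep : iIndepFun ![U, V, Z, W] μ)
    (hUd : Measure.map U μ = unifIcc) (hVd : Measure.map V μ = unifIcc)
    (hZd : Measure.map Z μ = unifIcc) (hWd : Measure.map W μ = unifIcc) :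
    (∫ ω, (|U ω - V ω| * |Z ω - W ω| / (2 * (Z ω + W ω)))
        * ((Z ω + W ω) / 2 * ((2 - Z ω - W ω) / 2)) ∂μ)
      - (∫ ω, |U ω - V ω| * |Z ω - W ω| / (2 * (Z ω + W ω)) ∂μ)
        * (∫ ω, (Z ω + W ω) / 2 * ((2 - Z ω - W ω) / 2) ∂μ) > 0 := by
  have hM : ∀ i, Measurable (![U, V, Z, W] i) := by
    intro i; fin_cases i <;> assumption
  have hPQ : IndepFun (fun ω => (U ω, V ω)) (fun ω => (Z ω, W ω)) μ := by
    have := hindep.indepFun_prodMk_prodMk hM 0 1 2 3 (by decide) (by decide) (by decide) (by decide)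
    simpa using this
  have hUV : IndepFun U V μ := by
    have := hindep.indepFun (show (0:Fin 4) ≠ 1 by decide)
    simpa using this
  have hZW : IndepFun Z W μ := by
    have := hindep.indepFun (show (2:Fin 4) ≠ 3 by decide)
    simpa using this
  have mapUV : μ.map (fun ω => (U ω, V ω)) = unifIcc.prod unifIcc := by
    have := (ProbabilityTheory.indepFun_iff_map_prod_eq_prod_map_map hU.aemeasurable
      hV.aemeasurable).mp hUV
    rw [this, hUd, hVd]
  have mapZW : μ.map (fun ω => (Z ω, W ω)) = unifIcc.prod unifIcc := by
    have := (ProbabilityTheory.indepFun_iff_map_prod_eq_prod_map_map hZ.aemeasurable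
      hW.aemeasurable).mp hZW
    rw [this, hZd, hWd]
  have mh₁ : Measurable fun p : ℝ × ℝ => |p.1 - p.2| := (measurable_fst.sub measurable_snd).abs
  have mf₂ : Measurable fun p : ℝ × ℝ => |p.1 - p.2| / (2 * (p.1 + p.2)) :=
    mh₁.div (measurable_const.mul (measurable_fst.add measurable_snd))
  have mg₂ : Measurable fun p : ℝ × ℝ => (p.1 + p.2) / 2 * ((2 - p.1 - p.2) / 2) := by
    measurability
  have mfg : Measurable fun p : ℝ × ℝ =>
      (|p.1 - p.2| / (2 * (p.1 + p.2))) * ((p.1 + p.2) / 2 * ((2 - p.1 - p.2) / 2)) :=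
    mf₂.mul mg₂
  -- marginal integrals via the image measures
  have EX : ∫ ω, |U ω - V ω| ∂μ = 4/15 := by
    have h := MeasureTheory.integral_map (μ := μ) (hU.prodMk hV).aemeasurable
      (f := fun p : ℝ × ℝ => |p.1 - p.2|) (by rw [mapUV]; exact mh₁.aestronglyMeasurable)
    rw [mapUV, Stmt8Aux.int_h] at h
    exact h.symm
  have EY1 : ∫ ω, |Z ω - W ω| / (2 * (Z ω + W ω)) ∂μ
      = ∫ p : ℝ × ℝ, |p.1 - p.2| / (2 * (p.1 + p.2)) ∂(unifIcc.prod unifIcc) := by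
    have h := MeasureTheory.integral_map (μ := μ) (hZ.prodMk hW).aemeasurable
      (f := fun p : ℝ × ℝ => |p.1 - p.2| / (2 * (p.1 + p.2)))
      (by rw [mapZW]; exact mf₂.aestronglyMeasurable)
    rw [mapZW] at h
    exact h.symm
  have EY2 : ∫ ω, (Z ω + W ω) / 2 * ((2 - Z ω - W ω) / 2) ∂μ = 67/300 := by
    have h := MeasureTheory.integral_map (μ := μ) (hZ.prodMk hW).aemeasurable
      (f := fun p : ℝ × ℝ => (p.1 + p.2) / 2 * ((2 - p.1 - p.2) / 2))
      (by rw [mapZW]; exact mg₂.aestronglyMeasurable)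
    rw [mapZW, Stmt8Aux.int_g] at h
    exact h.symm
  have EY12 : ∫ ω, (|Z ω - W ω| / (2 * (Z ω + W ω)))
      * ((Z ω + W ω) / 2 * ((2 - Z ω - W ω) / 2)) ∂μ = 1/30 := by
    have h := MeasureTheory.integral_map (μ := μ) (hZ.prodMk hW).aemeasurable
      (f := fun p : ℝ × ℝ => (|p.1 - p.2| / (2 * (p.1 + p.2)))
        * ((p.1 + p.2) / 2 * ((2 - p.1 - p.2) / 2)))
      (by rw [mapZW]; exact mfg.aestronglyMeasurable)
    rw [mapZW, Stmt8Aux.int_fg] at h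
    exact h.symm
  -- independence factorization
  have hI1 : IndepFun (fun ω => |U ω - V ω|)
      (fun ω => |Z ω - W ω| / (2 * (Z ω + W ω))) μ := hPQ.comp mh₁ mf₂
  have hI2 : IndepFun (fun ω => |U ω - V ω|)
      (fun ω => (|Z ω - W ω| / (2 * (Z ω + W ω)))
        * ((Z ω + W ω) / 2 * ((2 - Z ω - W ω) / 2))) μ := hPQ.comp mh₁ mfg
  have aX : AEStronglyMeasurable (fun ω => |U ω - V ω|) μ :=
    (mh₁.comp (hU.prodMk hV)).aestronglyMeasurable
  have aY1 : AEStronglyMeasurable (fun ω => |Z ω - W ω| / (2 * (Z ω + W ω))) μ :=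
    (mf₂.comp (hZ.prodMk hW)).aestronglyMeasurable
  have aY12 : AEStronglyMeasurable (fun ω => (|Z ω - W ω| / (2 * (Z ω + W ω)))
      * ((Z ω + W ω) / 2 * ((2 - Z ω - W ω) / 2))) μ :=
    (mfg.comp (hZ.prodMk hW)).aestronglyMeasurable
  have hB : ∫ ω, |U ω - V ω| * |Z ω - W ω| / (2 * (Z ω + W ω)) ∂μ
      = (∫ ω, |U ω - V ω| ∂μ) * ∫ ω, |Z ω - W ω| / (2 * (Z ω + W ω)) ∂μ := by
    have h := hI1.integral_mul_eq_mul_integral aX aY1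
    simp only [mul_div_assoc]
    exact h
  have hBT : ∫ ω, (|U ω - V ω| * |Z ω - W ω| / (2 * (Z ω + W ω)))
        * ((Z ω + W ω) / 2 * ((2 - Z ω - W ω) / 2)) ∂μ
      = (∫ ω, |U ω - V ω| ∂μ) * ∫ ω, (|Z ω - W ω| / (2 * (Z ω + W ω)))
        * ((Z ω + W ω) / 2 * ((2 - Z ω - W ω) / 2)) ∂μ := by
    have h := hI2.integral_mul_eq_mul_integral aX aY12
    have e : ∀ ω, (|U ω - V ω| * |Z ω - W ω| / (2 * (Z ω + W ω)))
        * ((Z ω + W ω) / 2 * ((2 - Z ω - W ω) / 2))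
        = |U ω - V ω| * ((|Z ω - W ω| / (2 * (Z ω + W ω)))
          * ((Z ω + W ω) / 2 * ((2 - Z ω - W ω) / 2))) := fun ω => by ring
    simp only [e]
    exact h
  rw [hB, hBT, EX, EY2, EY12]
  have hf := Stmt8Aux.int_f_lt
  rw [← EY1] at hf
  nlinarith [hf]
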